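/- arXiv:math/0703321 — 5 statements merged into one kernel-verified Lean document; each statement's English description precedes it below -/
import Mathlib

section
/- Let S ⊆ V be a 3-dimensional subspace and (c₁, c₂, c₃) an orthonormal basis of S. Then there exists a unique linear map m : S → V such that m(w) = π(e, f) for every orthonormal triple (e, f, w) of vectors in S whose matrix of coordinates with respect to (c₁, c₂, c₃) has determinant 1; moreover m preserves inner products, i.e. ⟨m(x), m(y)⟩ = ⟨x, y⟩ for all x, y ∈ S. -/
open scoped RealInnerProductSpace

section AuxVP
variable {V : Type*} [NormedAddCommGroup V] [InnerProductSpace ℝ V]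

private lemma aux_anti (π : V →ₗ[ℝ] V →ₗ[ℝ] V) (hπalt : ∀ x : V, π x x = 0) (x y : V) :
    π x y = - π y x := by
  have h := hπalt (x + y)
  simp only [map_add, LinearMap.add_apply, hπalt, zero_add, add_zero] at h
  exact eq_neg_of_add_eq_zero_right h

private lemma aux_pair (π : V →ₗ[ℝ] V →ₗ[ℝ] V)
    (hπvp : ∀ u v : V, Orthonormal ℝ ![u, v] → Orthonormal ℝ ![u, v, π u v])
    (u v : V) (huu : ⟪u, u⟫ = 1) (hvv : ⟪v, v⟫ = 1) (huv : ⟪u, v⟫ = 0) :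
    ⟪π u v, π u v⟫ = 1 ∧ ⟪u, π u v⟫ = 0 ∧ ⟪v, π u v⟫ = 0 := by
  have hvu : ⟪v, u⟫ = 0 := by rw [real_inner_comm]; exact huv
  have ho : Orthonormal ℝ ![u, v] := by
    rw [orthonormal_iff_ite]
    intro i j
    fin_cases i <;> fin_cases j <;> simp [huu, hvv, huv, hvu] <;> left <;>
      nlinarith [norm_nonneg u, norm_nonneg v, real_inner_self_eq_norm_sq u, real_inner_self_eq_norm_sq v]
  have h3 := orthonormal_iff_ite.mp (hπvp u v ho)
  refine ⟨?_, ?_, ?_⟩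
  · simpa using h3 2 2
  · simpa using h3 0 2
  · simpa using h3 1 2

private lemma aux_cross (π : V →ₗ[ℝ] V →ₗ[ℝ] V)
    (hπvp : ∀ u v : V, Orthonormal ℝ ![u, v] → Orthonormal ℝ ![u, v, π u v])
    (u v w : V) (huu : ⟪u, u⟫ = 1) (hvv : ⟪v, v⟫ = 1) (hww : ⟪w, w⟫ = 1)
    (huv : ⟪u, v⟫ = 0) (huw : ⟪u, w⟫ = 0) (hvw : ⟪v, w⟫ = 0) :
    ⟪π u v, π u w⟫ = 0 := by
  have hwv : ⟪w, v⟫ = 0 := by rw [real_inner_comm]; exact hvw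
  have hxx : ⟪(3/5 : ℝ) • v + (4/5 : ℝ) • w, (3/5 : ℝ) • v + (4/5 : ℝ) • w⟫ = 1 := by
    simp only [inner_add_left, inner_add_right, real_inner_smul_left, real_inner_smul_right,
      hvv, hww, hvw, hwv]
    norm_num
  have hux : ⟪u, (3/5 : ℝ) • v + (4/5 : ℝ) • w⟫ = 0 := by
    simp [inner_add_right, real_inner_smul_right, huv, huw]
  obtain ⟨h1, -, -⟩ := aux_pair π hπvp u _ huu hxx hux
  have hvv' := (aux_pair π hπvp u v huu hvv huv).1
  have hww' := (aux_pair π hπvp u w huu hww huw).1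
  have hexp : π u ((3/5 : ℝ) • v + (4/5 : ℝ) • w)
      = (3/5 : ℝ) • π u v + (4/5 : ℝ) • π u w := by
    simp [map_add, map_smul]
  rw [hexp] at h1
  have hsym : ⟪π u w, π u v⟫ = ⟪π u v, π u w⟫ := real_inner_comm _ _
  simp only [inner_add_left, inner_add_right, real_inner_smul_left, real_inner_smul_right,
    hvv', hww', hsym] at h1
  linarith

end AuxVP

set_option maxHeartbeats 1000000 in
theorem stmt2
    {V : Type*} [NormedAddCommGroup V] [InnerProductSpace ℝ V]
    [FiniteDimensional ℝ V] (hdim : Module.finrank ℝ V = 7)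
    (π : V →ₗ[ℝ] V →ₗ[ℝ] V) (hπalt : ∀ x : V, π x x = 0)
    (hπvp : ∀ u v : V, Orthonormal ℝ ![u, v] → Orthonormal ℝ ![u, v, π u v])
    (S : Submodule ℝ V) (hS : Module.finrank ℝ S = 3)
    (c : Fin 3 → V) (hcS : ∀ i, c i ∈ S) (hc : Orthonormal ℝ c)
    (hcspan : Submodule.span ℝ (Set.range c) = S) :
    (∃! m : S →ₗ[ℝ] V,
      ∀ (e f w : V) (_ : e ∈ S) (_ : f ∈ S) (hw : w ∈ S),
        Orthonormal ℝ ![e, f, w] →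
        Matrix.det (Matrix.of fun i j => ⟪c j, ![e, f, w] i⟫) = 1 →
        m ⟨w, hw⟩ = π e f) ∧
    ∀ m : S →ₗ[ℝ] V,
      (∀ (e f w : V) (_ : e ∈ S) (_ : f ∈ S) (hw : w ∈ S),
        Orthonormal ℝ ![e, f, w] →
        Matrix.det (Matrix.of fun i j => ⟪c j, ![e, f, w] i⟫) = 1 →
        m ⟨w, hw⟩ = π e f) →
      ∀ x y : S, ⟪m x, m y⟫ = ⟪(x : V), (y : V)⟫ := by
  have hcc : ∀ i j, ⟪c i, c j⟫ = if i = j then 1 else 0 := orthonormal_iff_ite.mp hc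
  set c' : Fin 3 → S := fun i => (⟨c i, hcS i⟩ : S) with hc'def
  have hc' : Orthonormal ℝ c' := by
    rw [orthonormal_iff_ite]
    intro i j
    rw [Submodule.coe_inner]
    exact hcc i j
  set b : Module.Basis (Fin 3) ℝ S :=
    basisOfLinearIndependentOfCardEqFinrank hc'.linearIndependent (by simp [hS]) with hbdef
  have hbc : ⇑b = c' := coe_basisOfLinearIndependentOfCardEqFinrank _ _
  set ob : OrthonormalBasis (Fin 3) ℝ S := b.toOrthonormalBasis (by rw [hbc]; exact hc')
    with hobdef
  have hob : ∀ i, ob i = c' i := by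
    intro i
    rw [hobdef, Module.Basis.coe_toOrthonormalBasis, hbc]
  have hreprS : ∀ s : S, s = ∑ j, ⟪c j, (s : V)⟫ • c' j := by
    intro s
    conv_lhs => rw [← ob.sum_repr' s]
    refine Finset.sum_congr rfl fun j _ => ?_
    rw [hob j]
    congr 1
  have hrepr : ∀ s : S, (s : V) = ∑ j, ⟪c j, (s : V)⟫ • c j := by
    intro s
    have h := congrArg (Submodule.subtype S) (hreprS s)
    simpa using h
  have hinner : ∀ x y : V, x ∈ S → ⟪x, y⟫ = ∑ j, ⟪c j, x⟫ * ⟪c j, y⟫ := by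
    intro x y hx
    have hx' : x = ∑ j, ⟪c j, x⟫ • c j := by simpa using hrepr ⟨x, hx⟩
    conv_lhs => rw [hx']
    rw [sum_inner]
    exact Finset.sum_congr rfl fun j _ => by rw [real_inner_smul_left]
  set m : S →ₗ[ℝ] V := b.constr ℝ ![π (c 1) (c 2), π (c 2) (c 0), π (c 0) (c 1)] with hmdef
  have hmc : ∀ i, m (c' i) = ![π (c 1) (c 2), π (c 2) (c 0), π (c 0) (c 1)] i := by
    intro i
    rw [← congrFun hbc i, hmdef, Module.Basis.constr_basis]
  have hmain : ∀ (e f w : V) (he : e ∈ S) (hf : f ∈ S) (hw : w ∈ S),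
      Orthonormal ℝ ![e, f, w] →
      Matrix.det (Matrix.of fun i j => ⟪c j, ![e, f, w] i⟫) = 1 →
      m ⟨w, hw⟩ = π e f := by
    intro e f w he hf hw hON hdet
    have hONij := orthonormal_iff_ite.mp hON
    have hee : ⟪e, e⟫ = 1 := by simpa using hONij 0 0
    have hff : ⟪f, f⟫ = 1 := by simpa using hONij 1 1
    have hww2 : ⟪w, w⟫ = 1 := by simpa using hONij 2 2
    have hef : ⟪e, f⟫ = 0 := by simpa using hONij 0 1
    have hew : ⟪e, w⟫ = 0 := by simpa using hONij 0 2
    have hfw : ⟪f, w⟫ = 0 := by simpa using hONij 1 2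
    have hpp : ∑ j, ⟪c j, e⟫ * ⟪c j, e⟫ = 1 := by rw [← hinner e e he]; exact hee
    have hqq : ∑ j, ⟪c j, f⟫ * ⟪c j, f⟫ = 1 := by rw [← hinner f f hf]; exact hff
    have hrr : ∑ j, ⟪c j, w⟫ * ⟪c j, w⟫ = 1 := by rw [← hinner w w hw]; exact hww2
    have hpq : ∑ j, ⟪c j, e⟫ * ⟪c j, f⟫ = 0 := by rw [← hinner e f he]; exact hef
    rw [Fin.sum_univ_three] at hpp hqq hrr hpq
    rw [Matrix.det_fin_three] at hdet
    simp only [Matrix.of_apply, Matrix.cons_val', Matrix.cons_val_zero, Matrix.cons_val_one,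
      Matrix.head_cons, Matrix.cons_val_two, Matrix.tail_cons, Matrix.head_fin_const,
      Matrix.empty_val', Matrix.cons_val_fin_one] at hdet
    have hkey : (⟪c 0, w⟫ - (⟪c 1, e⟫ * ⟪c 2, f⟫ - ⟪c 2, e⟫ * ⟪c 1, f⟫))^2
        + (⟪c 1, w⟫ - (⟪c 2, e⟫ * ⟪c 0, f⟫ - ⟪c 0, e⟫ * ⟪c 2, f⟫))^2
        + (⟪c 2, w⟫ - (⟪c 0, e⟫ * ⟪c 1, f⟫ - ⟪c 1, e⟫ * ⟪c 0, f⟫))^2 = 0 := by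
      linear_combination hrr - 2 * hdet
        + (⟪c 0, f⟫ * ⟪c 0, f⟫ + ⟪c 1, f⟫ * ⟪c 1, f⟫ + ⟪c 2, f⟫ * ⟪c 2, f⟫) * hpp + hqq
        - (⟪c 0, e⟫ * ⟪c 0, f⟫ + ⟪c 1, e⟫ * ⟪c 1, f⟫ + ⟪c 2, e⟫ * ⟪c 2, f⟫) * hpq
    have e0 : ⟪c 0, w⟫ = ⟪c 1, e⟫ * ⟪c 2, f⟫ - ⟪c 2, e⟫ * ⟪c 1, f⟫ := by
      have h0 : (⟪c 0, w⟫ - (⟪c 1, e⟫ * ⟪c 2, f⟫ - ⟪c 2, e⟫ * ⟪c 1, f⟫))^2 = 0 := by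
        linarith [hkey, sq_nonneg (⟪c 0, w⟫ - (⟪c 1, e⟫ * ⟪c 2, f⟫ - ⟪c 2, e⟫ * ⟪c 1, f⟫)),
          sq_nonneg (⟪c 1, w⟫ - (⟪c 2, e⟫ * ⟪c 0, f⟫ - ⟪c 0, e⟫ * ⟪c 2, f⟫)),
          sq_nonneg (⟪c 2, w⟫ - (⟪c 0, e⟫ * ⟪c 1, f⟫ - ⟪c 1, e⟫ * ⟪c 0, f⟫))]
      have h0' := (pow_eq_zero_iff (two_ne_zero)).mp h0
      linarith
    have e1 : ⟪c 1, w⟫ = ⟪c 2, e⟫ * ⟪c 0, f⟫ - ⟪c 0, e⟫ * ⟪c 2, f⟫ := by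
      have h0 : (⟪c 1, w⟫ - (⟪c 2, e⟫ * ⟪c 0, f⟫ - ⟪c 0, e⟫ * ⟪c 2, f⟫))^2 = 0 := by
        linarith [hkey, sq_nonneg (⟪c 0, w⟫ - (⟪c 1, e⟫ * ⟪c 2, f⟫ - ⟪c 2, e⟫ * ⟪c 1, f⟫)),
          sq_nonneg (⟪c 1, w⟫ - (⟪c 2, e⟫ * ⟪c 0, f⟫ - ⟪c 0, e⟫ * ⟪c 2, f⟫)),
          sq_nonneg (⟪c 2, w⟫ - (⟪c 0, e⟫ * ⟪c 1, f⟫ - ⟪c 1, e⟫ * ⟪c 0, f⟫))]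
      have h0' := (pow_eq_zero_iff (two_ne_zero)).mp h0
      linarith
    have e2 : ⟪c 2, w⟫ = ⟪c 0, e⟫ * ⟪c 1, f⟫ - ⟪c 1, e⟫ * ⟪c 0, f⟫ := by
      have h0 : (⟪c 2, w⟫ - (⟪c 0, e⟫ * ⟪c 1, f⟫ - ⟪c 1, e⟫ * ⟪c 0, f⟫))^2 = 0 := by
        linarith [hkey, sq_nonneg (⟪c 0, w⟫ - (⟪c 1, e⟫ * ⟪c 2, f⟫ - ⟪c 2, e⟫ * ⟪c 1, f⟫)),
          sq_nonneg (⟪c 1, w⟫ - (⟪c 2, e⟫ * ⟪c 0, f⟫ - ⟪c 0, e⟫ * ⟪c 2, f⟫)),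
          sq_nonneg (⟪c 2, w⟫ - (⟪c 0, e⟫ * ⟪c 1, f⟫ - ⟪c 1, e⟫ * ⟪c 0, f⟫))]
      have h0' := (pow_eq_zero_iff (two_ne_zero)).mp h0
      linarith
    have he' : e = ⟪c 0, e⟫ • c 0 + ⟪c 1, e⟫ • c 1 + ⟪c 2, e⟫ • c 2 := by
      have h := hrepr ⟨e, he⟩
      rw [Fin.sum_univ_three] at h
      exact h
    have hf' : f = ⟪c 0, f⟫ • c 0 + ⟪c 1, f⟫ • c 1 + ⟪c 2, f⟫ • c 2 := by
      have h := hrepr ⟨f, hf⟩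
      rw [Fin.sum_univ_three] at h
      exact h
    have hwrep : m ⟨w, hw⟩ = ⟪c 0, w⟫ • π (c 1) (c 2) + ⟪c 1, w⟫ • π (c 2) (c 0)
        + ⟪c 2, w⟫ • π (c 0) (c 1) := by
      have h1 : (⟨w, hw⟩ : S) = ⟪c 0, w⟫ • c' 0 + ⟪c 1, w⟫ • c' 1 + ⟪c 2, w⟫ • c' 2 := by
        have h := hreprS ⟨w, hw⟩
        rw [Fin.sum_univ_three] at h
        exact h
      conv_lhs => rw [h1]
      rw [map_add, map_add, map_smul, map_smul, map_smul, hmc 0, hmc 1, hmc 2]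
      simp
    have hefrep : π e f = (⟪c 1, e⟫ * ⟪c 2, f⟫ - ⟪c 2, e⟫ * ⟪c 1, f⟫) • π (c 1) (c 2)
        + (⟪c 2, e⟫ * ⟪c 0, f⟫ - ⟪c 0, e⟫ * ⟪c 2, f⟫) • π (c 2) (c 0)
        + (⟪c 0, e⟫ * ⟪c 1, f⟫ - ⟪c 1, e⟫ * ⟪c 0, f⟫) • π (c 0) (c 1) := by
      conv_lhs => rw [he', hf']
      simp only [map_add, map_smul, LinearMap.add_apply, LinearMap.smul_apply, hπalt,
        aux_anti π hπalt (c 1) (c 0), aux_anti π hπalt (c 2) (c 1), aux_anti π hπalt (c 0) (c 2),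
        smul_zero, smul_neg, add_zero, zero_add]
      module
    rw [hwrep, e0, e1, e2, hefrep]
  have hON0 : Orthonormal ℝ ![c 1, c 2, c 0] := by
    rw [orthonormal_iff_ite]
    intro i j
    fin_cases i <;> fin_cases j <;> simp [hcc, hc.1]
  have hON1 : Orthonormal ℝ ![c 2, c 0, c 1] := by
    rw [orthonormal_iff_ite]
    intro i j
    fin_cases i <;> fin_cases j <;> simp [hcc, hc.1]
  have hON2 : Orthonormal ℝ ![c 0, c 1, c 2] := by
    rw [orthonormal_iff_ite]
    intro i j
    fin_cases i <;> fin_cases j <;> simp [hcc, hc.1]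
  have hdet0 : Matrix.det (Matrix.of fun i j => ⟪c j, ![c 1, c 2, c 0] i⟫) = 1 := by
    simp [Matrix.det_fin_three, hcc, hc.1]
  have hdet1 : Matrix.det (Matrix.of fun i j => ⟪c j, ![c 2, c 0, c 1] i⟫) = 1 := by
    simp [Matrix.det_fin_three, hcc, hc.1]
  have hdet2 : Matrix.det (Matrix.of fun i j => ⟪c j, ![c 0, c 1, c 2] i⟫) = 1 := by
    simp [Matrix.det_fin_three, hcc, hc.1]
  have huniq : ∀ m' : S →ₗ[ℝ] V,
      (∀ (e f w : V) (_ : e ∈ S) (_ : f ∈ S) (hw : w ∈ S),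
        Orthonormal ℝ ![e, f, w] →
        Matrix.det (Matrix.of fun i j => ⟪c j, ![e, f, w] i⟫) = 1 →
        m' ⟨w, hw⟩ = π e f) → m' = m := by
    intro m' hm'
    refine Module.Basis.ext b fun i => ?_
    rw [congrFun hbc i]
    fin_cases i
    · exact (hm' (c 1) (c 2) (c 0) (hcS 1) (hcS 2) (hcS 0) hON0 hdet0).trans
        (hmain (c 1) (c 2) (c 0) (hcS 1) (hcS 2) (hcS 0) hON0 hdet0).symm
    · exact (hm' (c 2) (c 0) (c 1) (hcS 2) (hcS 0) (hcS 1) hON1 hdet1).trans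
        (hmain (c 2) (c 0) (c 1) (hcS 2) (hcS 0) (hcS 1) hON1 hdet1).symm
    · exact (hm' (c 0) (c 1) (c 2) (hcS 0) (hcS 1) (hcS 2) hON2 hdet2).trans
        (hmain (c 0) (c 1) (c 2) (hcS 0) (hcS 1) (hcS 2) hON2 hdet2).symm
  refine ⟨⟨m, hmain, huniq⟩, ?_⟩
  intro m' hm' x y
  rw [huniq m' hm']
  have h00 : ⟪c 0, c 0⟫ = 1 := by simp [hcc, hc.1]
  have h11 : ⟪c 1, c 1⟫ = 1 := by simp [hcc, hc.1]
  have h22 : ⟪c 2, c 2⟫ = 1 := by simp [hcc, hc.1]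
  have h01 : ⟪c 0, c 1⟫ = 0 := by simp [hcc]
  have h02 : ⟪c 0, c 2⟫ = 0 := by simp [hcc]
  have h12 : ⟪c 1, c 2⟫ = 0 := by simp [hcc]
  have h10 : ⟪c 1, c 0⟫ = 0 := by simp [hcc]
  have h20 : ⟪c 2, c 0⟫ = 0 := by simp [hcc]
  have h21 : ⟪c 2, c 1⟫ = 0 := by simp [hcc]
  have hg0 := (aux_pair π hπvp (c 1) (c 2) h11 h22 h12).1
  have hg1 := (aux_pair π hπvp (c 2) (c 0) h22 h00 h20).1
  have hg2 := (aux_pair π hπvp (c 0) (c 1) h00 h11 h01).1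
  have hg01 : ⟪π (c 1) (c 2), π (c 2) (c 0)⟫ = 0 := by
    rw [aux_anti π hπalt (c 1) (c 2), inner_neg_left,
      aux_cross π hπvp (c 2) (c 1) (c 0) h22 h11 h00 h21 h20 h10, neg_zero]
  have hg02 : ⟪π (c 1) (c 2), π (c 0) (c 1)⟫ = 0 := by
    rw [aux_anti π hπalt (c 0) (c 1), inner_neg_right,
      aux_cross π hπvp (c 1) (c 2) (c 0) h11 h22 h00 h12 h10 h20, neg_zero]
  have hg12 : ⟪π (c 2) (c 0), π (c 0) (c 1)⟫ = 0 := by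
    rw [aux_anti π hπalt (c 2) (c 0), inner_neg_left,
      aux_cross π hπvp (c 0) (c 2) (c 1) h00 h22 h11 h02 h01 h21, neg_zero]
  have hg10 : ⟪π (c 2) (c 0), π (c 1) (c 2)⟫ = 0 := by rw [real_inner_comm]; exact hg01
  have hg20 : ⟪π (c 0) (c 1), π (c 1) (c 2)⟫ = 0 := by rw [real_inner_comm]; exact hg02
  have hg21 : ⟪π (c 0) (c 1), π (c 2) (c 0)⟫ = 0 := by rw [real_inner_comm]; exact hg12
  have hx : m x = ⟪c 0, (x : V)⟫ • π (c 1) (c 2) + ⟪c 1, (x : V)⟫ • π (c 2) (c 0)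
      + ⟪c 2, (x : V)⟫ • π (c 0) (c 1) := by
    have h1 : x = ⟪c 0, (x : V)⟫ • c' 0 + ⟪c 1, (x : V)⟫ • c' 1 + ⟪c 2, (x : V)⟫ • c' 2 := by
      have h := hreprS x
      rw [Fin.sum_univ_three] at h
      exact h
    conv_lhs => rw [h1]
    rw [map_add, map_add, map_smul, map_smul, map_smul, hmc 0, hmc 1, hmc 2]
    simp
  have hy : m y = ⟪c 0, (y : V)⟫ • π (c 1) (c 2) + ⟪c 1, (y : V)⟫ • π (c 2) (c 0)
      + ⟪c 2, (y : V)⟫ • π (c 0) (c 1) := by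
    have h1 : y = ⟪c 0, (y : V)⟫ • c' 0 + ⟪c 1, (y : V)⟫ • c' 1 + ⟪c 2, (y : V)⟫ • c' 2 := by
      have h := hreprS y
      rw [Fin.sum_univ_three] at h
      exact h
    conv_lhs => rw [h1]
    rw [map_add, map_add, map_smul, map_smul, map_smul, hmc 0, hmc 1, hmc 2]
    simp
  rw [hx, hy, hinner (x : V) (y : V) x.2, Fin.sum_univ_three]
  simp only [inner_add_left, inner_add_right, real_inner_smul_left, real_inner_smul_right,
    hg0, hg1, hg2, hg01, hg02, hg12, hg10, hg20, hg21]
  ring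
end

section
/- Let S ⊆ V be a 3-dimensional subspace and let P_S denote the orthogonal projection of V onto S. If (e, f, w) and (e', f', w') are two orthonormal bases of S, then ‖P_S(π(e, f))‖ = ‖P_S(π(e', f'))‖, and likewise ‖P_{S^⊥}(π(e, f))‖ = ‖P_{S^⊥}(π(e', f'))‖, where P_{S^⊥} is the orthogonal projection onto the orthogonal complement of S. -/
open scoped RealInnerProductSpace

section helpers
variable {V : Type*} [NormedAddCommGroup V] [InnerProductSpace ℝ V]

lemma pairON {u v : V} (hu : ‖u‖ = 1) (hv : ‖v‖ = 1) (huv : ⟪u, v⟫ = 0) :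
    Orthonormal ℝ ![u, v] := by
  rw [orthonormal_iff_ite]
  intro i j
  fin_cases i <;> fin_cases j <;>
    simp [hu, hv, huv, real_inner_self_eq_norm_mul_norm, real_inner_comm u v]

lemma vp_orth (π : V →ₗ[ℝ] V →ₗ[ℝ] V)
    (hπvp : ∀ u v : V, Orthonormal ℝ ![u, v] → Orthonormal ℝ ![u, v, π u v])
    {u v : V} (huv : ⟪u, v⟫ = 0) : ⟪π u v, u⟫ = 0 ∧ ⟪π u v, v⟫ = 0 := by
  rcases eq_or_ne u 0 with rfl | hu
  · simp
  rcases eq_or_ne v 0 with rfl | hv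
  · simp
  have ha : ‖u‖⁻¹ ≠ 0 := inv_ne_zero (norm_ne_zero_iff.2 hu)
  have hb : ‖v‖⁻¹ ≠ 0 := inv_ne_zero (norm_ne_zero_iff.2 hv)
  have hon : Orthonormal ℝ ![‖u‖⁻¹ • u, ‖v‖⁻¹ • v] := by
    apply pairON
    · simp [norm_smul, inv_mul_cancel₀ (norm_ne_zero_iff.2 hu)]
    · simp [norm_smul, inv_mul_cancel₀ (norm_ne_zero_iff.2 hv)]
    · simp [real_inner_smul_left, real_inner_smul_right, huv]
  have h3 := orthonormal_iff_ite.mp (hπvp _ _ hon)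
  have h20 := h3 2 0
  have h21 := h3 2 1
  simp [map_smul, LinearMap.smul_apply, real_inner_smul_left, real_inner_smul_right,
    ha, hb] at h20 h21
  exact ⟨h20, h21⟩

lemma vp_swap (π : V →ₗ[ℝ] V →ₗ[ℝ] V)
    (hπvp : ∀ u v : V, Orthonormal ℝ ![u, v] → Orthonormal ℝ ![u, v, π u v])
    {u v w : V} (huv : ⟪u, v⟫ = 0) (huw : ⟪u, w⟫ = 0) :
    ⟪π u w, v⟫ = - ⟪π u v, w⟫ := by
  have h := (vp_orth π hπvp (u := u) (v := v + w) (by simp [inner_add_right, huv, huw])).2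
  simp only [map_add, inner_add_left, inner_add_right] at h
  have h1 := (vp_orth π hπvp huv).2
  have h2 := (vp_orth π hπvp huw).2
  linarith

lemma pi_antisymm (π : V →ₗ[ℝ] V →ₗ[ℝ] V) (hπalt : ∀ x : V, π x x = 0) (u v : V) :
    π v u = - π u v := by
  have h := hπalt (u + v)
  simp only [map_add, LinearMap.add_apply, hπalt] at h
  have h2 : π u v + π v u = 0 := by rw [← h]; abel
  exact eq_neg_of_add_eq_zero_right h2

end helpers

set_option maxHeartbeats 1000000 in
theorem stmt3
    {V : Type*} [NormedAddCommGroup V] [InnerProductSpace ℝ V]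
    [FiniteDimensional ℝ V] (hdim : Module.finrank ℝ V = 7)
    (π : V →ₗ[ℝ] V →ₗ[ℝ] V) (hπalt : ∀ x : V, π x x = 0)
    (hπvp : ∀ u v : V, Orthonormal ℝ ![u, v] → Orthonormal ℝ ![u, v, π u v])
    (S : Submodule ℝ V) (hS : Module.finrank ℝ S = 3)
    (e f w e' f' w' : V)
    (heS : e ∈ S) (hfS : f ∈ S) (hwS : w ∈ S)
    (heS' : e' ∈ S) (hfS' : f' ∈ S) (hwS' : w' ∈ S)
    (hb : Orthonormal ℝ ![e, f, w]) (hb' : Orthonormal ℝ ![e', f', w']) :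
    ‖S.orthogonalProjection (π e f)‖ = ‖S.orthogonalProjection (π e' f')‖ ∧
    ‖Sᗮ.orthogonalProjection (π e f)‖ = ‖Sᗮ.orthogonalProjection (π e' f')‖ := by
  have hbi := orthonormal_iff_ite.mp hb
  have hbi' := orthonormal_iff_ite.mp hb'
  have hee : ⟪e, e⟫ = 1 := by simpa using hbi 0 0
  have hef : ⟪e, f⟫ = 0 := by simpa using hbi 0 1
  have hew : ⟪e, w⟫ = 0 := by simpa using hbi 0 2
  have hfe : ⟪f, e⟫ = 0 := by simpa using hbi 1 0
  have hff : ⟪f, f⟫ = 1 := by simpa using hbi 1 1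
  have hfw : ⟪f, w⟫ = 0 := by simpa using hbi 1 2
  have hwe : ⟪w, e⟫ = 0 := by simpa using hbi 2 0
  have hwf : ⟪w, f⟫ = 0 := by simpa using hbi 2 1
  have hww : ⟪w, w⟫ = 1 := by simpa using hbi 2 2
  have he'e' : ⟪e', e'⟫ = 1 := by simpa using hbi' 0 0
  have he'f' : ⟪e', f'⟫ = 0 := by simpa using hbi' 0 1
  have he'w' : ⟪e', w'⟫ = 0 := by simpa using hbi' 0 2
  have hf'f' : ⟪f', f'⟫ = 1 := by simpa using hbi' 1 1
  have hf'w' : ⟪f', w'⟫ = 0 := by simpa using hbi' 1 2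
  have hw'e' : ⟪w', e'⟫ = 0 := by simpa using hbi' 2 0
  have hw'f' : ⟪w', f'⟫ = 0 := by simpa using hbi' 2 1
  have hw'w' : ⟪w', w'⟫ = 1 := by simpa using hbi' 2 2
  have hwnorm : ‖w‖ = 1 := by simpa using hb.1 2
  have hwnorm' : ‖w'‖ = 1 := by simpa using hb'.1 2
  have hen : ‖e‖ = 1 := by simpa using hb.1 0
  have hfn : ‖f‖ = 1 := by simpa using hb.1 1
  -- products have unit norm
  have hefON : Orthonormal ℝ ![e, f] :=
    pairON (by simpa using hb.1 0) (by simpa using hb.1 1) hef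
  have hefON' : Orthonormal ℝ ![e', f'] :=
    pairON (by simpa using hb'.1 0) (by simpa using hb'.1 1) he'f'
  have hpn : ‖π e f‖ = 1 := by simpa using (hπvp e f hefON).1 2
  have hpn' : ‖π e' f'‖ = 1 := by simpa using (hπvp e' f' hefON').1 2
  -- span
  have hli : LinearIndependent ℝ ![e, f, w] := hb.linearIndependent
  have hle : Submodule.span ℝ (Set.range ![e, f, w]) ≤ S := by
    rw [Submodule.span_le]; rintro x ⟨i, rfl⟩; fin_cases i <;> simpa
  have hsp : Submodule.span ℝ (Set.range ![e, f, w]) = S :=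
    Submodule.eq_of_le_of_finrank_le hle
      (by rw [hS, finrank_span_eq_card hli]; simp)
  have horthS : ∀ x : V, ⟪x, e⟫ = 0 → ⟪x, f⟫ = 0 → ⟪x, w⟫ = 0 → x ∈ Sᗮ := by
    intro x h1 h2 h3
    rw [← hsp, Submodule.mem_orthogonal]
    intro u hu
    induction hu using Submodule.span_induction with
    | mem z hz =>
        obtain ⟨i, rfl⟩ := hz
        fin_cases i
        · rw [real_inner_comm]; exact h1
        · rw [real_inner_comm]; exact h2
        · rw [real_inner_comm]; exact h3
    | zero => simp
    | add a b _ _ ha hbb => simp [inner_add_left, ha, hbb]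
    | smul r a _ ha => simp [inner_smul_left, ha]
  have hrep : ∀ x, x ∈ S → x = ⟪x, e⟫ • e + ⟪x, f⟫ • f + ⟪x, w⟫ • w := by
    intro x hx
    have hd : x - (⟪x, e⟫ • e + ⟪x, f⟫ • f + ⟪x, w⟫ • w) ∈ Sᗮ := by
      apply horthS <;>
        simp [inner_sub_left, inner_add_left, real_inner_smul_left,
          hee, hef, hew, hfe, hff, hfw, hwe, hwf, hww, hen,
            hfn, hwnorm]
    have hm : x - (⟪x, e⟫ • e + ⟪x, f⟫ • f + ⟪x, w⟫ • w) ∈ S :=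
      sub_mem hx (add_mem (add_mem (S.smul_mem _ heS) (S.smul_mem _ hfS)) (S.smul_mem _ hwS))
    have h0 : x - (⟪x, e⟫ • e + ⟪x, f⟫ • f + ⟪x, w⟫ • w) = 0 :=
      Submodule.mem_bot ℝ |>.mp
        ((Submodule.orthogonal_disjoint S).le_bot (Submodule.mem_inf.mpr ⟨hm, hd⟩))
    rw [sub_eq_zero] at h0
    exact h0
  obtain ⟨a0, a1, a2, hA⟩ : ∃ p q r : ℝ, e' = p • e + q • f + r • w :=
    ⟨_, _, _, hrep e' heS'⟩
  obtain ⟨b0, b1, b2, hB⟩ : ∃ p q r : ℝ, f' = p • e + q • f + r • w :=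
    ⟨_, _, _, hrep f' hfS'⟩
  obtain ⟨c0, c1, c2, hC⟩ : ∃ p q r : ℝ, w' = p • e + q • f + r • w :=
    ⟨_, _, _, hrep w' hwS'⟩
  -- orthonormality relations of the coefficient rows
  have expand : ∀ p q r p' q' r' : ℝ,
      ⟪p • e + q • f + r • w, p' • e + q' • f + r' • w⟫ = p * p' + q * q' + r * r' := by
    intro p q r p' q' r'
    simp [inner_add_left, inner_add_right, real_inner_smul_left, real_inner_smul_right,
      hee, hef, hew, hfe, hff, hfw, hwe, hwf, hww, hen,
      hfn, hwnorm]
    ring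
  have r11 : a0 * a0 + a1 * a1 + a2 * a2 = 1 := by
    have h := he'e'; rw [hA, expand] at h; linarith
  have r22 : b0 * b0 + b1 * b1 + b2 * b2 = 1 := by
    have h := hf'f'; rw [hB, expand] at h; linarith
  have r33 : c0 * c0 + c1 * c1 + c2 * c2 = 1 := by
    have h := hw'w'; rw [hC, expand] at h; linarith
  have r12 : a0 * b0 + a1 * b1 + a2 * b2 = 0 := by
    have h := he'f'; rw [hA, hB, expand] at h; linarith
  have r13 : a0 * c0 + a1 * c1 + a2 * c2 = 0 := by
    have h := he'w'; rw [hA, hC, expand] at h; linarith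
  have r23 : b0 * c0 + b1 * c1 + b2 * c2 = 0 := by
    have h := hf'w'; rw [hB, hC, expand] at h; linarith
  set A : Matrix (Fin 3) (Fin 3) ℝ := !![a0, a1, a2; b0, b1, b2; c0, c1, c2] with hAdef
  have hT : A.transpose = !![a0, b0, c0; a1, b1, c1; a2, b2, c2] := by
    ext i j
    fin_cases i <;> fin_cases j <;> simp [hAdef]
  have hAAT : A * A.transpose = 1 := by
    rw [hAdef, hT, Matrix.mul_fin_three, Matrix.one_fin_three]
    ext i j
    fin_cases i <;> fin_cases j <;> simp [Matrix.vecHead, Matrix.vecTail] <;>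
      first
      | linear_combination r11
      | linear_combination r22
      | linear_combination r33
      | linear_combination r12
      | linear_combination r13
      | linear_combination r23
      | linear_combination r13 - r23
      | linear_combination r12 - r23
      | linear_combination r12 - r13
      | linear_combination r23 - r13
      | linear_combination r23 - r12
      | linear_combination r13 - r12
  have hdet2 : A.det * A.det = 1 := by
    have h := congrArg Matrix.det hAAT
    rwa [Matrix.det_mul, Matrix.det_transpose, Matrix.det_one] at h
  have hdet : A.det = 1 ∨ A.det = -1 := mul_self_eq_one_iff.mp hdet2
  have hdetv : A.det = a0 * b1 * c2 - a0 * b2 * c1 - a1 * b0 * c2 + a1 * b2 * c0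
      + a2 * b0 * c1 - a2 * b1 * c0 := by
    rw [hAdef, Matrix.det_fin_three]; simp; try ring
  -- values of the triple product form on the basis
  have v_fe : π f e = - π e f := pi_antisymm π hπalt e f
  have v_we : π w e = - π e w := pi_antisymm π hπalt e w
  have v_wf : π w f = - π f w := pi_antisymm π hπalt f w
  have o_ef := vp_orth π hπvp hef
  have o_ew := vp_orth π hπvp hew
  have o_fw := vp_orth π hπvp hfw
  have s_ewf : ⟪π e w, f⟫ = - ⟪π e f, w⟫ := vp_swap π hπvp hef hew
  have s_fwe : ⟪π f w, e⟫ = ⟪π e f, w⟫ := by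
    have h := vp_swap π hπvp hfe hfw
    rw [v_fe] at h; simpa using h
  have hc' : ⟪π e' f', w'⟫ = A.det * ⟪π e f, w⟫ := by
    rw [hA, hB, hC, hdetv]
    simp [map_add, map_smul, LinearMap.add_apply, LinearMap.smul_apply,
      inner_add_left, inner_add_right, real_inner_smul_left, real_inner_smul_right,
      hπalt, v_fe, v_we, v_wf, o_ef.1, o_ef.2, o_ew.1, o_ew.2, o_fw.1, o_fw.2,
      s_ewf, s_fwe, inner_neg_left]
    ring
  -- projections onto S
  have o_ef' := vp_orth π hπvp he'f'
  have hPS : (S.orthogonalProjection (π e f) : V) = ⟪π e f, w⟫ • w := by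
    apply Submodule.eq_starProjection_of_mem_orthogonal (S.smul_mem _ hwS)
    apply horthS <;>
      simp [inner_sub_left, real_inner_smul_left, o_ef.1, o_ef.2, hwe, hwf, hww, hwnorm]
  have hli' : LinearIndependent ℝ ![e', f', w'] := hb'.linearIndependent
  have hle' : Submodule.span ℝ (Set.range ![e', f', w']) ≤ S := by
    rw [Submodule.span_le]; rintro x ⟨i, rfl⟩; fin_cases i <;> simpa
  have hsp' : Submodule.span ℝ (Set.range ![e', f', w']) = S :=
    Submodule.eq_of_le_of_finrank_le hle'
      (by rw [hS, finrank_span_eq_card hli']; simp)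
  have horthS' : ∀ x : V, ⟪x, e'⟫ = 0 → ⟪x, f'⟫ = 0 → ⟪x, w'⟫ = 0 → x ∈ Sᗮ := by
    intro x h1 h2 h3
    rw [← hsp', Submodule.mem_orthogonal]
    intro u hu
    induction hu using Submodule.span_induction with
    | mem z hz =>
        obtain ⟨i, rfl⟩ := hz
        fin_cases i
        · rw [real_inner_comm]; exact h1
        · rw [real_inner_comm]; exact h2
        · rw [real_inner_comm]; exact h3
    | zero => simp
    | add a b _ _ ha hbb => simp [inner_add_left, ha, hbb]
    | smul r a _ ha => simp [inner_smul_left, ha]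
  have hPS' : (S.orthogonalProjection (π e' f') : V) = ⟪π e' f', w'⟫ • w' := by
    apply Submodule.eq_starProjection_of_mem_orthogonal (S.smul_mem _ hwS')
    apply horthS' <;>
      simp [inner_sub_left, real_inner_smul_left, o_ef'.1, o_ef'.2, hw'e', hw'f', hw'w', hwnorm']
  have hnPS : ‖S.orthogonalProjection (π e f)‖ = |⟪π e f, w⟫| := by
    rw [Submodule.coe_norm, hPS, norm_smul, hwnorm, Real.norm_eq_abs, mul_one]
  have hnPS' : ‖S.orthogonalProjection (π e' f')‖ = |⟪π e' f', w'⟫| := by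
    rw [Submodule.coe_norm, hPS', norm_smul, hwnorm', Real.norm_eq_abs, mul_one]
  have hfst : ‖S.orthogonalProjection (π e f)‖ = ‖S.orthogonalProjection (π e' f')‖ := by
    rw [hnPS, hnPS', hc', abs_mul]
    rcases hdet with h | h <;> rw [h] <;> simp
  refine ⟨hfst, ?_⟩
  have q := Submodule.norm_sq_eq_add_norm_sq_projection (π e f) S
  have q' := Submodule.norm_sq_eq_add_norm_sq_projection (π e' f') S
  rw [hpn] at q
  rw [hpn'] at q'
  have h2 : ‖Sᗮ.orthogonalProjection (π e f)‖ ^ 2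
      = ‖Sᗮ.orthogonalProjection (π e' f')‖ ^ 2 := by
    rw [hfst] at q; linarith
  exact (sq_eq_sq₀ (norm_nonneg _) (norm_nonneg _)).mp h2
end

section
/- Let λ ≠ μ be real numbers and let δ be a self-adjoint endomorphism of V whose eigenspace for λ has dimension 1 and whose eigenspace for μ has dimension 6. Then there exists a Cayley triple (u, v, z) such that δ(u) = λ•u and δ(x) = μ•x for each x ∈ {v, uv, z, uz, vz, (uv)z}. -/
open scoped RealInnerProductSpace

section Aux
variable {V : Type*} [NormedAddCommGroup V] [InnerProductSpace ℝ V]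

lemma pi_anti (π : V →ₗ[ℝ] V →ₗ[ℝ] V) (hπalt : ∀ x : V, π x x = 0) (u v : V) :
    π u v = - π v u := by
  have h := hπalt (u + v)
  simp only [map_add, LinearMap.add_apply, hπalt] at h
  rw [eq_neg_iff_add_eq_zero]
  linear_combination (norm := abel) h

lemma on2 {a b : V} (ha : ‖a‖ = 1) (hb : ‖b‖ = 1) (hab : ⟪a, b⟫ = 0) :
    Orthonormal ℝ ![a, b] := by
  rw [orthonormal_iff_ite]
  intro i j
  have hba : ⟪b, a⟫ = 0 := by rw [real_inner_comm]; exact hab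
  fin_cases i <;> fin_cases j <;>
    simp [ha, hb, hab, hba, real_inner_self_eq_norm_sq, sq]

lemma on3_get {a b c : V} (h : Orthonormal ℝ ![a, b, c]) :
    ‖c‖ = 1 ∧ ⟪a, c⟫ = 0 ∧ ⟪b, c⟫ = 0 := by
  refine ⟨h.1 2, h.2 (show (0 : Fin 3) ≠ 2 by decide),
    h.2 (show (1 : Fin 3) ≠ 2 by decide)⟩

variable (π : V →ₗ[ℝ] V →ₗ[ℝ] V) (hπalt : ∀ x : V, π x x = 0)
  (hπvp : ∀ u v : V, Orthonormal ℝ ![u, v] → Orthonormal ℝ ![u, v, π u v])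

include hπalt hπvp in
lemma inner_pi_self (u v : V) : ⟪u, π u v⟫ = 0 := by
  by_cases hu : u = 0
  · simp [hu]
  have hu' : ‖u‖ ≠ 0 := norm_ne_zero_iff.2 hu
  set w : V := v - (⟪u, v⟫ / ‖u‖ ^ 2) • u with hw
  have hpw : π u v = π u w := by simp [hw, map_sub, map_smul, hπalt]
  have huw : ⟪u, w⟫ = 0 := by
    simp only [hw, inner_sub_right, real_inner_smul_right, real_inner_self_eq_norm_sq]
    field_simp
    simp
  by_cases hwz : w = 0
  · rw [hpw, hwz]; simp
  have hw' : ‖w‖ ≠ 0 := norm_ne_zero_iff.2 hwz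
  have hon : Orthonormal ℝ ![‖u‖⁻¹ • u, ‖w‖⁻¹ • w] := by
    refine on2 ?_ ?_ ?_
    · simp [norm_smul, inv_mul_cancel₀ hu']
    · simp [norm_smul, inv_mul_cancel₀ hw']
    · simp [real_inner_smul_left, real_inner_smul_right, huw]
  have h02 := (on3_get (hπvp _ _ hon)).2.1
  simp only [map_smul, LinearMap.smul_apply, real_inner_smul_left,
    real_inner_smul_right] at h02
  field_simp at h02
  rw [hpw]
  rw [h02, mul_zero]

include hπalt hπvp in
lemma pi_inner_anti13 (u v w : V) : ⟪w, π u v⟫ = -⟪u, π w v⟫ := by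
  have h := inner_pi_self π hπalt hπvp (u + w) v
  simp only [map_add, LinearMap.add_apply, inner_add_left, inner_add_right,
    inner_pi_self π hπalt hπvp] at h
  linarith

include hπvp in
lemma norm_pi_eq (u v : V) (hu : ‖u‖ = 1) (huv : ⟪u, v⟫ = 0) : ‖π u v‖ = ‖v‖ := by
  by_cases hv : v = 0
  · simp [hv]
  have hv' : ‖v‖ ≠ 0 := norm_ne_zero_iff.2 hv
  have hon : Orthonormal ℝ ![u, ‖v‖⁻¹ • v] := by
    refine on2 hu (by simp [norm_smul, inv_mul_cancel₀ hv']) ?_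
    simp [real_inner_smul_right, huv]
  have := (on3_get (hπvp _ _ hon)).1
  rw [map_smul, norm_smul] at this
  simp only [norm_inv, norm_norm] at this
  field_simp at this
  linarith [this]

include hπvp in
lemma inner_pi_pi (u v w : V) (hu : ‖u‖ = 1) (huv : ⟪u, v⟫ = 0) (huw : ⟪u, w⟫ = 0) :
    ⟪π u v, π u w⟫ = ⟪v, w⟫ := by
  have h1 := norm_pi_eq π hπvp u v hu huv
  have h2 := norm_pi_eq π hπvp u w hu huw
  have h3 := norm_pi_eq π hπvp u (v + w) hu (by rw [inner_add_right, huv, huw, add_zero])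
  have e1 := norm_add_sq_real (π u v) (π u w)
  have e2 := norm_add_sq_real v w
  rw [← map_add, h3, e2, h1, h2] at e1
  linarith

end Aux

theorem stmt7
    {V : Type*} [NormedAddCommGroup V] [InnerProductSpace ℝ V]
    [FiniteDimensional ℝ V] (hdim : Module.finrank ℝ V = 7)
    (π : V →ₗ[ℝ] V →ₗ[ℝ] V) (hπalt : ∀ x : V, π x x = 0)
    (hπvp : ∀ u v : V, Orthonormal ℝ ![u, v] → Orthonormal ℝ ![u, v, π u v])
    (lam μ : ℝ) (hlm : lam ≠ μ)
    (δ : V →ₗ[ℝ] V) (hδ : LinearMap.IsSymmetric δ)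
    (h1 : Module.finrank ℝ (Module.End.eigenspace δ lam) = 1)
    (h6 : Module.finrank ℝ (Module.End.eigenspace δ μ) = 6) :
    ∃ u v z : V, Orthonormal ℝ ![u, v, π u v, z] ∧
      δ u = lam • u ∧ δ v = μ • v ∧ δ (π u v) = μ • π u v ∧ δ z = μ • z ∧
      δ (π u z) = μ • π u z ∧ δ (π v z) = μ • π v z ∧
      δ (π (π u v) z) = μ • π (π u v) z := by
  classical
  -- obtain a unit eigenvector u for lam
  have hElam_ne : Module.End.eigenspace δ lam ≠ ⊥ := by
    intro h
    rw [h, finrank_bot] at h1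
    exact one_ne_zero h1.symm
  obtain ⟨u₀, hu₀mem, hu₀⟩ := Submodule.exists_mem_ne_zero_of_ne_bot hElam_ne
  have hu₀n : ‖u₀‖ ≠ 0 := norm_ne_zero_iff.2 hu₀
  set u : V := ‖u₀‖⁻¹ • u₀ with hudef
  have hu1 : ‖u‖ = 1 := by simp [hudef, norm_smul, inv_mul_cancel₀ hu₀n]
  have hune : u ≠ 0 := by intro h; rw [h, norm_zero] at hu1; exact one_ne_zero hu1.symm
  have humem : u ∈ Module.End.eigenspace δ lam := Submodule.smul_mem _ _ hu₀mem
  have hδu : δ u = lam • u := Module.End.mem_eigenspace_iff.mp humem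
  -- span u = eigenspace lam
  have hspan : (ℝ ∙ u) = Module.End.eigenspace δ lam :=
    Submodule.eq_of_le_of_finrank_eq
      ((Submodule.span_singleton_le_iff_mem _ _).mpr humem)
      (by rw [finrank_span_singleton hune, h1])
  -- eigenspace μ = (span u)ᗮ
  have hle : Module.End.eigenspace δ μ ≤ (ℝ ∙ u)ᗮ := by
    intro x hx
    rw [Submodule.mem_orthogonal]
    intro y hy
    rw [hspan] at hy
    have hδy : δ y = lam • y := Module.End.mem_eigenspace_iff.mp hy
    have hδx : δ x = μ • x := Module.End.mem_eigenspace_iff.mp hx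
    have hsym := hδ y x
    rw [hδy, hδx, real_inner_smul_left, real_inner_smul_right] at hsym
    have : (lam - μ) * ⟪y, x⟫ = 0 := by linarith
    rcases mul_eq_zero.mp this with h | h
    · exact absurd (sub_eq_zero.mp h) hlm
    · exact h
  have horanks : Module.finrank ℝ ((ℝ ∙ u)ᗮ : Submodule ℝ V) = 6 := by
    have := Submodule.finrank_add_finrank_orthogonal (K := (ℝ ∙ u))
    rw [finrank_span_singleton hune, hdim] at this
    omega
  have hEμ : Module.End.eigenspace δ μ = (ℝ ∙ u)ᗮ :=
    Submodule.eq_of_le_of_finrank_eq hle (by rw [h6, horanks])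
  have hkey : ∀ x : V, ⟪u, x⟫ = 0 → δ x = μ • x := by
    intro x hx
    exact Module.End.mem_eigenspace_iff.mp
      (hEμ ▸ Submodule.mem_orthogonal_singleton_iff_inner_right.mpr hx)
  -- obtain v
  have hvne : ((ℝ ∙ u)ᗮ : Submodule ℝ V) ≠ ⊥ := by
    intro h; rw [h, finrank_bot] at horanks; omega
  obtain ⟨v₀, hv₀mem, hv₀⟩ := Submodule.exists_mem_ne_zero_of_ne_bot hvne
  have hv₀n : ‖v₀‖ ≠ 0 := norm_ne_zero_iff.2 hv₀
  set v : V := ‖v₀‖⁻¹ • v₀ with hvdef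
  have hv1 : ‖v‖ = 1 := by simp [hvdef, norm_smul, inv_mul_cancel₀ hv₀n]
  have huv : ⟪u, v⟫ = 0 := by
    have := Submodule.mem_orthogonal_singleton_iff_inner_right.mp hv₀mem
    rw [hvdef, real_inner_smul_right, this, mul_zero]
  -- facts about π u v
  set w : V := π u v with hwdef
  obtain ⟨hw1, huw, hvw⟩ := on3_get (hπvp u v (on2 hu1 hv1 huv))
  -- obtain z
  set W : Submodule ℝ V := Submodule.span ℝ (Set.range ![u, v, w]) with hWdef
  have hW3 : Module.finrank ℝ W ≤ 3 := by
    have h := finrank_range_le_card (R := ℝ) ![u, v, w]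
    rw [Set.finrank, Fintype.card_fin] at h
    exact h
  have hWo : Module.finrank ℝ (Wᗮ : Submodule ℝ V) ≠ 0 := by
    have := Submodule.finrank_add_finrank_orthogonal (K := W)
    rw [hdim] at this
    omega
  have hWne : (Wᗮ : Submodule ℝ V) ≠ ⊥ := by
    intro h; rw [h, finrank_bot] at hWo; omega
  obtain ⟨z₀, hz₀mem, hz₀⟩ := Submodule.exists_mem_ne_zero_of_ne_bot hWne
  have hz₀n : ‖z₀‖ ≠ 0 := norm_ne_zero_iff.2 hz₀
  set z : V := ‖z₀‖⁻¹ • z₀ with hzdef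
  have hz1 : ‖z‖ = 1 := by simp [hzdef, norm_smul, inv_mul_cancel₀ hz₀n]
  have hzmem : z ∈ Wᗮ := Submodule.smul_mem _ _ hz₀mem
  have hWz : ∀ i : Fin 3, ⟪![u, v, w] i, z⟫ = 0 := fun i =>
    (Submodule.mem_orthogonal W z).mp hzmem _ (Submodule.subset_span ⟨i, rfl⟩)
  have huz : ⟪u, z⟫ = 0 := hWz 0
  have hvz : ⟪v, z⟫ = 0 := hWz 1
  have hwz : ⟪w, z⟫ = 0 := hWz 2
  refine ⟨u, v, z, ?_, hδu, hkey v huv, hkey w (by rw [hwdef]; exact huw), hkey z huz,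
    hkey _ (inner_pi_self π hπalt hπvp u z), hkey _ ?_, hkey _ ?_⟩
  · rw [orthonormal_iff_ite]
    intro i j
    have hvu : ⟪v, u⟫ = 0 := by rw [real_inner_comm]; exact huv
    have hwu : ⟪w, u⟫ = 0 := by rw [real_inner_comm]; exact huw
    have hwv : ⟪w, v⟫ = 0 := by rw [real_inner_comm]; exact hvw
    have hzu : ⟪z, u⟫ = 0 := by rw [real_inner_comm]; exact huz
    have hzv : ⟪z, v⟫ = 0 := by rw [real_inner_comm]; exact hvz
    have hzw : ⟪z, w⟫ = 0 := by rw [real_inner_comm]; exact hwz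
    fin_cases i <;> fin_cases j <;>
      simp [← hwdef, hu1, hv1, (show ‖w‖ = 1 from hw1), hz1, huv, hvu, (show ⟪u, w⟫ = 0 from huw), hwu, (show ⟪v, w⟫ = 0 from hvw), hwv, huz, hzu,
        hvz, hzv, hwz, hzw, real_inner_self_eq_norm_sq, sq]
  · -- ⟪u, π v z⟫ = 0
    rw [pi_anti π hπalt v z, inner_neg_right,
      pi_inner_anti13 π hπalt hπvp z v u]
    rw [real_inner_comm] at hwz
    rw [← hwdef, hwz, neg_neg]
  · -- ⟪u, π (π u v) z⟫ = 0
    rw [pi_inner_anti13 π hπalt hπvp (π u v) z u,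
      inner_pi_pi π hπvp u v z hu1 huv huz, hvz, neg_zero]
end

section
/- Let λ₁, λ₂, λ₃, μ be pairwise distinct real numbers and let δ be a self-adjoint endomorphism of V whose eigenspaces for λ₁, λ₂, λ₃, μ have dimensions 1, 1, 1, 4 respectively. Then there exists a unique α ∈ [0, π/2] for which some Cayley triple (u, v, z) satisfies: δ(u) = λ₁•u, δ(v) = λ₂•v, δ(x) = μ•x for each x ∈ {uz, vz, (uv)z}, δ(cos α • uv - sin α • z) = λ₃ • (cos α • uv - sin α • z), and δ(sin α • uv + cos α • z) = μ • (sin α • uv + cos α • z). -/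
open scoped RealInnerProductSpace

section Helpers
variable {V : Type*} [NormedAddCommGroup V] [InnerProductSpace ℝ V]

lemma on2_of {u v : V} (hu : ‖u‖ = 1) (hv : ‖v‖ = 1) (huv : ⟪u,v⟫ = 0) :
    Orthonormal ℝ ![u, v] := by
  constructor
  · intro i; fin_cases i <;> simpa
  · intro i j hij; fin_cases i <;> fin_cases j <;> simp_all [real_inner_comm u v]

lemma on3_of {a b c : V} (ha : ‖a‖ = 1) (hb : ‖b‖ = 1) (hc : ‖c‖ = 1)
    (hab : ⟪a,b⟫ = 0) (hac : ⟪a,c⟫ = 0) (hbc : ⟪b,c⟫ = 0) :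
    Orthonormal ℝ ![a, b, c] := by
  constructor
  · intro i; fin_cases i <;> simpa
  · intro i j hij; fin_cases i <;> fin_cases j <;>
      simp_all [real_inner_comm a b, real_inner_comm a c, real_inner_comm b c]

lemma on4_of {a b c d : V} (ha : ‖a‖ = 1) (hb : ‖b‖ = 1) (hc : ‖c‖ = 1) (hd : ‖d‖ = 1)
    (hab : ⟪a,b⟫ = 0) (hac : ⟪a,c⟫ = 0) (had : ⟪a,d⟫ = 0)
    (hbc : ⟪b,c⟫ = 0) (hbd : ⟪b,d⟫ = 0) (hcd : ⟪c,d⟫ = 0) :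
    Orthonormal ℝ ![a, b, c, d] := by
  constructor
  · intro i; fin_cases i <;> simpa
  · intro i j hij; fin_cases i <;> fin_cases j <;>
      simp_all [real_inner_comm a b, real_inner_comm a c, real_inner_comm a d,
        real_inner_comm b c, real_inner_comm b d, real_inner_comm c d]

lemma mem_range_span_orth {n : ℕ} (b : Fin n → V) (x : V) (h : ∀ i, ⟪b i, x⟫ = 0) :
    x ∈ (Submodule.span ℝ (Set.range b))ᗮ := by
  rw [Submodule.mem_orthogonal]
  intro y hy
  induction hy using Submodule.span_induction with
  | mem y hy => obtain ⟨i, rfl⟩ := hy; exact h i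
  | zero => simp
  | add a b _ _ ha hb => rw [inner_add_left, ha, hb, add_zero]
  | smul t a _ ha => rw [real_inner_smul_left, ha, mul_zero]

lemma eig_orth {δ : V →ₗ[ℝ] V} (hδ : LinearMap.IsSymmetric δ) {a b : ℝ} (hab : a ≠ b)
    {x y : V} (hx : δ x = a • x) (hy : δ y = b • y) : ⟪x, y⟫ = 0 := by
  have h := hδ x y
  rw [hx, hy, real_inner_smul_left, real_inner_smul_right] at h
  have h2 : (a - b) * ⟪x, y⟫ = 0 := by linarith
  exact (mul_eq_zero.1 h2).resolve_left (sub_ne_zero.2 hab)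

lemma exists_unit (S : Submodule ℝ V) [FiniteDimensional ℝ V]
    (h : 0 < Module.finrank ℝ S) : ∃ x ∈ S, ‖x‖ = 1 := by
  have : Nontrivial S := Module.finrank_pos_iff.1 h
  obtain ⟨⟨x, hxS⟩, hx0⟩ := exists_ne (0 : S)
  have hx : x ≠ 0 := fun h' => hx0 (by simp [h'])
  refine ⟨‖x‖⁻¹ • x, S.smul_mem _ hxS, ?_⟩
  rw [norm_smul]
  field_simp
  rw [one_div, norm_inv, norm_norm]; exact mul_inv_cancel₀ (norm_ne_zero_iff.2 hx)

lemma unit_eq (S : Submodule ℝ V) [FiniteDimensional ℝ V] (hS : Module.finrank ℝ S = 1)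
    {u x : V} (hu : u ∈ S) (hu1 : ‖u‖ = 1) (hx : x ∈ S) (hx1 : ‖x‖ = 1) :
    x = u ∨ x = -u := by
  have hu0 : u ≠ 0 := by intro h; rw [h, norm_zero] at hu1; norm_num at hu1
  have hspan : Submodule.span ℝ {u} = S := by
    refine Submodule.eq_of_le_of_finrank_eq ?_ ?_
    · rwa [Submodule.span_singleton_le_iff_mem]
    · rw [finrank_span_singleton hu0, hS]
  rw [← hspan, Submodule.mem_span_singleton] at hx
  obtain ⟨t, rfl⟩ := hx
  rw [norm_smul, hu1, mul_one, Real.norm_eq_abs] at hx1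
  rcases abs_eq (by norm_num : (0:ℝ) ≤ 1) |>.1 hx1 with rfl | rfl
  · left; simp
  · right; simp

variable (π : V →ₗ[ℝ] V →ₗ[ℝ] V) (hπalt : ∀ x : V, π x x = 0)
  (hπvp : ∀ u v : V, Orthonormal ℝ ![u, v] → Orthonormal ℝ ![u, v, π u v])

include hπalt in
lemma vp_anticomm (x y : V) : π x y = - π y x := by
  have h := hπalt (x + y)
  simp only [map_add, LinearMap.add_apply, hπalt, zero_add, add_zero] at h
  rw [add_comm] at h
  exact eq_neg_of_add_eq_zero_left h

include hπvp in
lemma vp_basic {u v : V} (h : Orthonormal ℝ ![u, v]) :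
    ‖π u v‖ = 1 ∧ ⟪u, π u v⟫ = 0 ∧ ⟪v, π u v⟫ = 0 := by
  have h3 := hπvp u v h
  refine ⟨by simpa using h3.1 2, ?_, ?_⟩
  · simpa using h3.2 (i := 0) (j := 2) (by decide)
  · simpa using h3.2 (i := 1) (j := 2) (by decide)

include hπalt hπvp in
lemma vp_key (x y : V) : ⟪π x y, x⟫ = 0 ∧ ⟪π x y, y⟫ = 0 ∧
    ‖π x y‖ ^ 2 = ‖x‖ ^ 2 * ‖y‖ ^ 2 - ⟪x, y⟫ ^ 2 := by
  by_cases hx : x = 0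
  · simp [hx]
  set y' := y - (⟪x, y⟫ / ‖x‖ ^ 2) • x with hy'
  have hxn : (0:ℝ) < ‖x‖ := norm_pos_iff.2 hx
  have hxy' : ⟪x, y'⟫ = 0 := by
    simp only [hy', inner_sub_right, real_inner_smul_right, real_inner_self_eq_norm_sq]
    field_simp; ring
  have hsub : y - y' = (⟪x, y⟫ / ‖x‖ ^ 2) • x := by simp [hy']
  have hπxy : π x y = π x y' := by
    have h0 : π x (y - y') = 0 := by rw [hsub, map_smul, hπalt, smul_zero]
    rw [map_sub, sub_eq_zero] at h0
    exact h0
  have hysq : ‖y‖ ^ 2 = ⟪x, y⟫ ^ 2 / ‖x‖ ^ 2 + ‖y'‖ ^ 2 := by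
    have h1 : y = (⟪x, y⟫ / ‖x‖ ^ 2) • x + y' := by rw [← hsub]; abel
    have h2 : ‖(⟪x, y⟫ / ‖x‖ ^ 2) • x + y'‖ ^ 2
        = ‖(⟪x, y⟫ / ‖x‖ ^ 2) • x‖ ^ 2 + ‖y'‖ ^ 2 := by
      rw [norm_add_sq_real, real_inner_smul_left, hxy']; ring
    calc ‖y‖ ^ 2 = ‖(⟪x, y⟫ / ‖x‖ ^ 2) • x + y'‖ ^ 2 := by rw [← h1]
    _ = ‖(⟪x, y⟫ / ‖x‖ ^ 2) • x‖ ^ 2 + ‖y'‖ ^ 2 := h2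
    _ = ⟪x, y⟫ ^ 2 / ‖x‖ ^ 2 + ‖y'‖ ^ 2 := by
        rw [norm_smul, mul_pow]
        rw [show ‖(⟪x, y⟫ / ‖x‖ ^ 2)‖ ^ 2 = ⟪x, y⟫ ^ 2 / ‖x‖ ^ 4 by
          rw [Real.norm_eq_abs, sq_abs, div_pow]; ring_nf]
        field_simp
  by_cases hy0 : y' = 0
  · have hz : π x y = 0 := by rw [hπxy, hy0, map_zero]
    refine ⟨by simp [hz], by simp [hz], ?_⟩
    rw [hz, hysq, hy0]
    simp only [norm_zero]
    have hxne : ‖x‖ ≠ 0 := ne_of_gt hxn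
    field_simp
    ring
  · have hyn : (0:ℝ) < ‖y'‖ := norm_pos_iff.2 hy0
    set e₁ := ‖x‖⁻¹ • x with he1
    set e₂ := ‖y'‖⁻¹ • y' with he2
    have hone : Orthonormal ℝ ![e₁, e₂] := by
      refine on2_of ?_ ?_ ?_
      · rw [he1, norm_smul]; field_simp; rw [one_div, norm_inv, norm_norm]; exact mul_inv_cancel₀ hxn.ne'
      · rw [he2, norm_smul]; field_simp; rw [one_div, norm_inv, norm_norm]; exact mul_inv_cancel₀ hyn.ne'
      · rw [he1, he2, real_inner_smul_left, real_inner_smul_right, hxy']; ring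
    obtain ⟨hn, h1, h2⟩ := vp_basic π hπvp hone
    have hexp : π x y = (‖x‖ * ‖y'‖) • π e₁ e₂ := by
      rw [hπxy]
      have he : π e₁ e₂ = (‖x‖⁻¹ * ‖y'‖⁻¹) • π x y' := by
        rw [he1, he2, map_smul, map_smul, LinearMap.smul_apply, smul_smul, mul_comm]
      rw [he, smul_smul]
      rw [show (‖x‖ * ‖y'‖) * (‖x‖⁻¹ * ‖y'‖⁻¹) = 1 by field_simp]
      rw [one_smul]
    have hinx : ⟪π x y, x⟫ = 0 := by
      rw [hexp, real_inner_smul_left]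
      rw [show ⟪π e₁ e₂, x⟫ = ‖x‖ * ⟪e₁, π e₁ e₂⟫ by
        rw [he1, real_inner_comm, real_inner_smul_left]; field_simp [real_inner_comm]]
      rw [h1]; ring
    have hiny' : ⟪π x y, y'⟫ = 0 := by
      rw [hexp, real_inner_smul_left]
      rw [show ⟪π e₁ e₂, y'⟫ = ‖y'‖ * ⟪e₂, π e₁ e₂⟫ by
        rw [he2, real_inner_comm, real_inner_smul_left]; field_simp [real_inner_comm]]
      rw [h2]; ring
    have hiny : ⟪π x y, y⟫ = 0 := by
      have hd : ⟪π x y, y - y'⟫ = 0 := by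
        rw [hsub, real_inner_smul_right, hinx, mul_zero]
      rw [inner_sub_right, hiny', sub_zero] at hd
      exact hd
    refine ⟨hinx, hiny, ?_⟩
    have hnsq : ‖π x y‖ ^ 2 = ‖x‖ ^ 2 * ‖y'‖ ^ 2 := by
      rw [hexp, norm_smul, hn, mul_one, Real.norm_eq_abs, sq_abs, mul_pow]
    rw [hnsq, hysq]
    field_simp
    ring

include hπalt hπvp in
lemma vp_swap23 (x y z : V) : ⟪π x y, z⟫ = - ⟪π x z, y⟫ := by
  have h := (vp_key π hπalt hπvp x (y + z)).2.1
  simp only [map_add, inner_add_left, inner_add_right] at h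
  have h1 := (vp_key π hπalt hπvp x y).2.1
  have h2 := (vp_key π hπalt hπvp x z).2.1
  linarith

include hπalt hπvp in
lemma vp_inner_mul (x y z : V) :
    ⟪π x y, π x z⟫ = ‖x‖ ^ 2 * ⟪y, z⟫ - ⟪x, y⟫ * ⟪x, z⟫ := by
  have h := (vp_key π hπalt hπvp x (y + z)).2.2
  have h1 := (vp_key π hπalt hπvp x y).2.2
  have h2 := (vp_key π hπalt hπvp x z).2.2
  rw [map_add, norm_add_sq_real, norm_add_sq_real, inner_add_right] at h
  linarith

end Helpers
set_option maxHeartbeats 1000000 in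
theorem stmt10
    {V : Type*} [NormedAddCommGroup V] [InnerProductSpace ℝ V]
    [FiniteDimensional ℝ V] (hdim : Module.finrank ℝ V = 7)
    (π : V →ₗ[ℝ] V →ₗ[ℝ] V) (hπalt : ∀ x : V, π x x = 0)
    (hπvp : ∀ u v : V, Orthonormal ℝ ![u, v] → Orthonormal ℝ ![u, v, π u v])
    (l₁ l₂ l₃ μ : ℝ)
    (h12 : l₁ ≠ l₂) (h13 : l₁ ≠ l₃) (h1m : l₁ ≠ μ)
    (h23 : l₂ ≠ l₃) (h2m : l₂ ≠ μ) (h3m : l₃ ≠ μ)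
    (δ : V →ₗ[ℝ] V) (hδ : LinearMap.IsSymmetric δ)
    (hd1 : Module.finrank ℝ (Module.End.eigenspace δ l₁) = 1)
    (hd2 : Module.finrank ℝ (Module.End.eigenspace δ l₂) = 1)
    (hd3 : Module.finrank ℝ (Module.End.eigenspace δ l₃) = 1)
    (hdm : Module.finrank ℝ (Module.End.eigenspace δ μ) = 4) :
    ∃! α : ℝ, α ∈ Set.Icc (0 : ℝ) (Real.pi / 2) ∧ ∃ u v z : V,
      Orthonormal ℝ ![u, v, π u v, z] ∧
      δ u = l₁ • u ∧ δ v = l₂ • v ∧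
      δ (π u z) = μ • π u z ∧ δ (π v z) = μ • π v z ∧
      δ (π (π u v) z) = μ • π (π u v) z ∧
      δ (Real.cos α • π u v - Real.sin α • z) =
        l₃ • (Real.cos α • π u v - Real.sin α • z) ∧
      δ (Real.sin α • π u v + Real.cos α • z) =
        μ • (Real.sin α • π u v + Real.cos α • z) := by
  set E1 := Module.End.eigenspace δ l₁ with hE1
  set E2 := Module.End.eigenspace δ l₂ with hE2
  set E3 := Module.End.eigenspace δ l₃ with hE3
  set Em := Module.End.eigenspace δ μ with hEm
  clear_value E1 E2 E3 Em
  have memiff : ∀ (S : Submodule ℝ V) (t : ℝ), S = Module.End.eigenspace δ t →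
      ∀ x : V, x ∈ S ↔ δ x = t • x := by
    rintro S t rfl x; exact Module.End.mem_eigenspace_iff
  obtain ⟨u, huE, hu1⟩ := exists_unit E1 (by rw [hd1]; norm_num)
  obtain ⟨v, hvE, hv1⟩ := exists_unit E2 (by rw [hd2]; norm_num)
  obtain ⟨w₀, hw₀E, hw₀1⟩ := exists_unit E3 (by rw [hd3]; norm_num)
  have hδu : δ u = l₁ • u := (memiff E1 l₁ hE1 u).1 huE
  have hδv : δ v = l₂ • v := (memiff E2 l₂ hE2 v).1 hvE
  have hδw₀ : δ w₀ = l₃ • w₀ := (memiff E3 l₃ hE3 w₀).1 hw₀E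
  have huv0 : ⟪u, v⟫ = 0 := eig_orth hδ h12 hδu hδv
  have honuv : Orthonormal ℝ ![u, v] := on2_of hu1 hv1 huv0
  obtain ⟨hπn, hπu, hπv⟩ := vp_basic π hπvp honuv
  -- decompose π u v over E3 ⊔ Em
  have honli : LinearIndependent ℝ ![u, v] := honuv.linearIndependent
  have hU2 : Module.finrank ℝ (Submodule.span ℝ (Set.range ![u, v])) = 2 := by
    rw [finrank_span_eq_card honli]; simp
  have hU2o : Module.finrank ℝ ((Submodule.span ℝ (Set.range ![u, v]))ᗮ) = 5 := by
    have := Submodule.finrank_add_finrank_orthogonal (Submodule.span ℝ (Set.range ![u, v]))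
    omega
  have hinf : E3 ⊓ Em = ⊥ := by
    rw [eq_bot_iff]
    rintro x ⟨hx3, hxm⟩
    have e3 : δ x = l₃ • x := (memiff E3 l₃ hE3 x).1 hx3
    have em : δ x = μ • x := (memiff Em μ hEm x).1 hxm
    have : (l₃ - μ) • x = 0 := by rw [sub_smul, ← e3, ← em, sub_self]
    rcases smul_eq_zero.1 this with h | h
    · exact absurd (sub_eq_zero.1 h) h3m
    · simp [h]
  have hsuprank : Module.finrank ℝ ((E3 ⊔ Em : Submodule ℝ V)) = 5 := by
    have := Submodule.finrank_sup_add_finrank_inf_eq E3 Em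
    rw [hinf] at this
    simp only [finrank_bot] at this
    omega
  have hsuple : E3 ⊔ Em ≤ (Submodule.span ℝ (Set.range ![u, v]))ᗮ := by
    apply sup_le
    · intro a ha
      apply mem_range_span_orth
      have hδa : δ a = l₃ • a := (memiff E3 l₃ hE3 a).1 ha
      intro i; fin_cases i
      · simpa using eig_orth hδ h13 hδu hδa
      · simpa using eig_orth hδ h23 hδv hδa
    · intro a ha
      apply mem_range_span_orth
      have hδa : δ a = μ • a := (memiff Em μ hEm a).1 ha
      intro i; fin_cases i
      · simpa using eig_orth hδ h1m hδu hδa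
      · simpa using eig_orth hδ h2m hδv hδa
  have hsup : E3 ⊔ Em = (Submodule.span ℝ (Set.range ![u, v]))ᗮ :=
    Submodule.eq_of_le_of_finrank_eq hsuple (by rw [hsuprank, hU2o])
  have hπuvmem : π u v ∈ E3 ⊔ Em := by
    rw [hsup]
    apply mem_range_span_orth
    intro i; fin_cases i
    · simpa using hπu
    · simpa using hπv
  obtain ⟨a, haE, m, hmE, ham⟩ := Submodule.mem_sup.1 hπuvmem
  have hE3span : Submodule.span ℝ {w₀} = E3 := by
    refine Submodule.eq_of_le_of_finrank_eq ?_ ?_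
    · rwa [Submodule.span_singleton_le_iff_mem]
    · rw [finrank_span_singleton (by intro h; rw [h, norm_zero] at hw₀1; norm_num at hw₀1), hd3]
  obtain ⟨c, rfl⟩ := Submodule.mem_span_singleton.1 (hE3span ▸ haE)
  -- sign normalisation
  obtain ⟨w, c', hwE, hw1, hc'0, hdec⟩ :
      ∃ (w : V) (c' : ℝ), w ∈ E3 ∧ ‖w‖ = 1 ∧ 0 ≤ c' ∧ π u v = c' • w + m := by
    rcases le_or_gt 0 c with hc | hc
    · exact ⟨w₀, c, hw₀E, hw₀1, hc, ham.symm⟩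
    · refine ⟨-w₀, -c, neg_mem hw₀E, by simpa using hw₀1, by linarith, ?_⟩
      rw [neg_smul_neg]; exact ham.symm
  have hδw : δ w = l₃ • w := (memiff E3 l₃ hE3 w).1 hwE
  have hwu : ⟪u, w⟫ = 0 := eig_orth hδ h13 hδu hδw
  have hwv : ⟪v, w⟫ = 0 := eig_orth hδ h23 hδv hδw
  -- unit vector in direction of m
  set s := ‖m‖ with hs
  clear_value s
  obtain ⟨mh, hmhE, hmh1, hmeq⟩ : ∃ mh, mh ∈ Em ∧ ‖mh‖ = 1 ∧ m = s • mh := by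
    by_cases hm0 : m = 0
    · obtain ⟨mh, h1, h2⟩ := exists_unit Em (by rw [hdm]; norm_num)
      exact ⟨mh, h1, h2, by rw [hm0, hs, hm0, norm_zero, zero_smul]⟩
    · refine ⟨s⁻¹ • m, Em.smul_mem _ hmE, ?_, ?_⟩
      · rw [norm_smul, hs]
        field_simp
        rw [one_div, norm_inv, norm_norm]; exact mul_inv_cancel₀ (norm_ne_zero_iff.2 hm0)
      · rw [smul_smul, hs]
        rw [mul_inv_cancel₀ (norm_ne_zero_iff.2 hm0), one_smul]
  have hδmh : δ mh = μ • mh := (memiff Em μ hEm mh).1 hmhE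
  have hmhu : ⟪u, mh⟫ = 0 := eig_orth hδ h1m hδu hδmh
  have hmhv : ⟪v, mh⟫ = 0 := eig_orth hδ h2m hδv hδmh
  have hwmh : ⟪w, mh⟫ = 0 := eig_orth hδ h3m hδw hδmh
  have hdec' : π u v = c' • w + s • mh := by rw [hdec, hmeq]
  have hs0 : 0 ≤ s := hs ▸ norm_nonneg m
  have hww : ⟪w, w⟫ = 1 := by rw [real_inner_self_eq_norm_sq, hw1]; norm_num
  have hmm : ⟪mh, mh⟫ = 1 := by rw [real_inner_self_eq_norm_sq, hmh1]; norm_num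
  have hmhw : ⟪mh, w⟫ = 0 := by rw [real_inner_comm]; exact hwmh
  have hc'w : ⟪π u v, w⟫ = c' := by
    rw [hdec']
    simp only [inner_add_left, real_inner_smul_left, hww, hmhw]
    ring
  have hsum : c' ^ 2 + s ^ 2 = 1 := by
    have h1 : ‖π u v‖ ^ 2 = 1 := by rw [hπn]; norm_num
    rw [hdec', norm_add_sq_real] at h1
    simp only [norm_smul, real_inner_smul_left, real_inner_smul_right, hwmh, hmhw, hw1, hmh1,
      Real.norm_eq_abs, mul_pow, sq_abs] at h1
    nlinarith [h1]
  have hc'le : c' ≤ 1 := by nlinarith [hsum, hc'0, sq_nonneg s, sq_nonneg (c' + 1)]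
  obtain ⟨z, hz⟩ : ∃ z : V, z = c' • mh - s • w := ⟨_, rfl⟩
  have hzu : ⟪u, z⟫ = 0 := by
    rw [hz]
    simp only [inner_sub_right, real_inner_smul_right, hmhu, hwu]
    ring
  have hzv : ⟪v, z⟫ = 0 := by
    rw [hz]
    simp only [inner_sub_right, real_inner_smul_right, hmhv, hwv]
    ring
  have hzπ : ⟪π u v, z⟫ = 0 := by
    rw [hdec', hz]
    simp only [inner_sub_right, inner_add_left, real_inner_smul_left, real_inner_smul_right,
      hww, hmm, hmhw, hwmh]
    ring
  have hz1 : ‖z‖ = 1 := by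
    have h2 : ‖z‖ ^ 2 = 1 := by
      rw [hz, norm_sub_sq_real]
      simp only [norm_smul, real_inner_smul_left, real_inner_smul_right, hwmh, hmhw, hw1, hmh1,
        Real.norm_eq_abs, mul_pow, sq_abs]
      nlinarith [hsum]
    nlinarith [norm_nonneg z]
  have hon4 : Orthonormal ℝ ![u, v, π u v, z] :=
    on4_of hu1 hv1 hπn hz1 huv0 hπu hzu hπv hzv hzπ
  -- membership criterion for Em
  have hon3 : Orthonormal ℝ ![u, v, w] := on3_of hu1 hv1 hw1 huv0 hwu hwv
  have hS3 : Module.finrank ℝ (Submodule.span ℝ (Set.range ![u, v, w])) = 3 := by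
    rw [finrank_span_eq_card hon3.linearIndependent]; simp
  have hS3o : Module.finrank ℝ ((Submodule.span ℝ (Set.range ![u, v, w]))ᗮ) = 4 := by
    have := Submodule.finrank_add_finrank_orthogonal (Submodule.span ℝ (Set.range ![u, v, w]))
    omega
  have hEmEq : Em = (Submodule.span ℝ (Set.range ![u, v, w]))ᗮ := by
    refine Submodule.eq_of_le_of_finrank_eq ?_ (by rw [hdm, hS3o])
    intro x hx
    have hδx : δ x = μ • x := (memiff Em μ hEm x).1 hx
    apply mem_range_span_orth
    intro i; fin_cases i
    · simpa using eig_orth hδ h1m hδu hδx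
    · simpa using eig_orth hδ h2m hδv hδx
    · simpa using eig_orth hδ h3m hδw hδx
  have hmemEm : ∀ x : V, ⟪u, x⟫ = 0 → ⟪v, x⟫ = 0 → ⟪w, x⟫ = 0 → δ x = μ • x := by
    intro x h1 h2 h3
    apply (memiff Em μ hEm x).1
    rw [hEmEq]
    apply mem_range_span_orth
    intro i; fin_cases i <;> simpa
  -- w as combination
  have hwcomb : c' • π u v - s • z = w := by
    have : c' • π u v - s • z = (c' ^ 2 + s ^ 2) • w := by
      rw [hdec', hz]; module
    rw [this, hsum, one_smul]
  have hmhcomb : s • π u v + c' • z = mh := by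
    have : s • π u v + c' • z = (c' ^ 2 + s ^ 2) • mh := by
      rw [hdec', hz]; module
    rw [this, hsum, one_smul]
  -- triple products in Em
  have key := vp_key π hπalt hπvp
  have swap := vp_swap23 π hπalt hπvp
  have mull := vp_inner_mul π hπalt hπvp
  have anti := vp_anticomm π hπalt
  have hzv' : ⟪z, v⟫ = 0 := by rw [real_inner_comm]; exact hzv
  have hzu' : ⟪z, u⟫ = 0 := by rw [real_inner_comm]; exact hzu
  have huz_uv : ⟪π u z, π u v⟫ = 0 := by
    rw [mull u z v, hu1, hzv', hzu]; ring
  have hvz_uv : ⟪π v z, π u v⟫ = 0 := by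
    rw [anti u v, inner_neg_right, mull v z u, hv1, hzu', hzv]; ring
  have hpz_uv : ⟪π (π u v) z, π u v⟫ = 0 := (key (π u v) z).1
  have hδuz : δ (π u z) = μ • π u z := by
    apply hmemEm
    · rw [real_inner_comm]; exact (key u z).1
    · rw [real_inner_comm, swap u z v, hzπ, neg_zero]
    · rw [real_inner_comm, ← hwcomb, inner_sub_right]
      simp only [real_inner_smul_right, huz_uv, (key u z).2.1]
      ring
  have hδvz : δ (π v z) = μ • π v z := by
    apply hmemEm
    · rw [real_inner_comm, swap v z u, anti v u, inner_neg_left, hzπ]; ring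
    · rw [real_inner_comm]; exact (key v z).1
    · rw [real_inner_comm, ← hwcomb, inner_sub_right]
      simp only [real_inner_smul_right, hvz_uv, (key v z).2.1]
      ring
  have hδpz : δ (π (π u v) z) = μ • π (π u v) z := by
    apply hmemEm
    · rw [real_inner_comm, swap (π u v) z u, anti (π u v) u, inner_neg_left,
        swap u (π u v) z, huz_uv]
      ring
    · rw [real_inner_comm, swap (π u v) z v, anti (π u v) v, inner_neg_left,
        swap v (π u v) z, hvz_uv]
      ring
    · rw [real_inner_comm, ← hwcomb, inner_sub_right]
      simp only [real_inner_smul_right, hpz_uv, (key (π u v) z).2.1]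
      ring
  have hα0 : 0 ≤ Real.arccos c' := Real.arccos_nonneg c'
  have hαle : Real.arccos c' ≤ Real.pi / 2 := Real.arccos_le_pi_div_two.2 hc'0
  have hcos : Real.cos (Real.arccos c') = c' := Real.cos_arccos (by linarith) hc'le
  have hsin : Real.sin (Real.arccos c') = s := by
    rw [Real.sin_arccos, show 1 - c' ^ 2 = s ^ 2 by linarith]
    exact Real.sqrt_sq hs0
  refine ⟨Real.arccos c', ⟨⟨hα0, hαle⟩, u, v, z, hon4, hδu, hδv, hδuz, hδvz, hδpz, ?_, ?_⟩, ?_⟩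
  · rw [hcos, hsin, hwcomb]; exact hδw
  · rw [hcos, hsin, hmhcomb]; exact hδmh
  -- uniqueness
  rintro β ⟨⟨hβ0, hβle⟩, u', v', z', hon', hδu', hδv', -, -, -, h3', -⟩
  have hu'1 : ‖u'‖ = 1 := by simpa using hon'.1 0
  have hv'1 : ‖v'‖ = 1 := by simpa using hon'.1 1
  have hp'1 : ‖π u' v'‖ = 1 := by simpa using hon'.1 2
  have hz'1 : ‖z'‖ = 1 := by simpa using hon'.1 3
  have hpz'0 : ⟪π u' v', z'⟫ = 0 := by simpa using hon'.2 (show ((2:Fin 4)) ≠ 3 by decide)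
  have hu'E : u' ∈ E1 := (memiff E1 l₁ hE1 u').2 hδu'
  have hv'E : v' ∈ E2 := (memiff E2 l₂ hE2 v').2 hδv'
  have hwwE : Real.cos β • π u' v' - Real.sin β • z' ∈ E3 :=
    (memiff E3 l₃ hE3 _).2 h3'
  have hww1 : ‖Real.cos β • π u' v' - Real.sin β • z'‖ = 1 := by
    have h2 : ‖Real.cos β • π u' v' - Real.sin β • z'‖ ^ 2 = 1 := by
      rw [norm_sub_sq_real]
      simp only [norm_smul, real_inner_smul_left, real_inner_smul_right, hp'1, hz'1, hpz'0,
        Real.norm_eq_abs, mul_pow, sq_abs]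
      nlinarith only [Real.sin_sq_add_cos_sq β]
    nlinarith only [h2, norm_nonneg (Real.cos β • π u' v' - Real.sin β • z')]
  have hcosww : ⟪π u' v', Real.cos β • π u' v' - Real.sin β • z'⟫ = Real.cos β := by
    rw [inner_sub_right, real_inner_smul_right, real_inner_smul_right,
      real_inner_self_eq_norm_sq, hp'1, hpz'0]
    ring
  have habs1 : |⟪π u' v', w⟫| = c' := by
    rcases unit_eq E1 hd1 huE hu1 hu'E hu'1 with hA | hA <;>
      rcases unit_eq E2 hd2 hvE hv1 hv'E hv'1 with hB | hB <;>
      rw [hA, hB] <;>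
      simp [map_neg, LinearMap.neg_apply, inner_neg_left, abs_neg, hc'w, abs_of_nonneg hc'0]
  have habs2 : |Real.cos β| = c' := by
    rw [← hcosww]
    rcases unit_eq E3 hd3 hwE hw1 hwwE hww1 with hC | hC <;> rw [hC]
    · exact habs1
    · rw [inner_neg_right, abs_neg]; exact habs1
  have hcosnn : 0 ≤ Real.cos β := by
    apply Real.cos_nonneg_of_mem_Icc
    constructor
    · have := Real.pi_pos; linarith
    · exact hβle
  have hcosβ : Real.cos β = c' := by rw [← habs2, abs_of_nonneg hcosnn]
  apply Real.injOn_cos ⟨hβ0, by linarith [Real.pi_pos]⟩ ⟨hα0, Real.arccos_le_pi c'⟩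
  rw [hcosβ, hcos]
end

section
/- Let U ⊆ V be a 2-dimensional subspace, let x ∈ U^⊥, and let P_U denote the orthogonal projection of V onto U. Then for any two unit vectors v, v' ∈ U, ‖P_U(π(x, v))‖ = ‖P_U(π(x, v'))‖. -/
open scoped RealInnerProductSpace

lemma aux17_inner_self {V : Type*} [NormedAddCommGroup V] [InnerProductSpace ℝ V]
    (π : V →ₗ[ℝ] V →ₗ[ℝ] V)
    (hπvp : ∀ u v : V, Orthonormal ℝ ![u, v] → Orthonormal ℝ ![u, v, π u v])
    (x u : V) (h : ⟪x, u⟫ = 0) : ⟪u, π x u⟫ = 0 := by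
  rcases eq_or_ne x 0 with rfl | hx0
  · simp
  rcases eq_or_ne u 0 with rfl | hu0
  · simp
  set x' := ‖x‖⁻¹ • x with hx'def
  set u' := ‖u‖⁻¹ • u with hu'def
  have hx1 : ‖x'‖ = 1 := norm_smul_inv_norm hx0
  have hu1 : ‖u'‖ = 1 := norm_smul_inv_norm hu0
  have hi : ⟪x', u'⟫ = 0 := by
    rw [hx'def, hu'def, real_inner_smul_left, real_inner_smul_right, h]; ring
  have hi' : ⟪u', x'⟫ = 0 := by rw [real_inner_comm]; exact hi
  have hon : Orthonormal ℝ ![x', u'] := by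
    rw [orthonormal_iff_ite]
    intro i j
    fin_cases i <;> fin_cases j <;>
      simp only [Matrix.cons_val_zero, Matrix.cons_val_one, Matrix.head_cons, Fin.mk_one,
        Fin.zero_eta, if_true, if_false, Fin.isValue]
    · rw [real_inner_self_eq_norm_sq, hx1]; norm_num
    · simpa using hi
    · simpa using hi'
    · rw [real_inner_self_eq_norm_sq, hu1]; norm_num
  have h3 := (hπvp x' u' hon).2 (show (1 : Fin 3) ≠ 2 by decide)
  simp only [Matrix.cons_val_one, Matrix.head_cons, Matrix.cons_val_two, Matrix.tail_cons,
    Matrix.cons_val_zero] at h3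
  have hπ' : π x' u' = (‖x‖⁻¹ * ‖u‖⁻¹) • π x u := by
    rw [hx'def, hu'def, LinearMap.map_smul₂, map_smul, smul_smul]
  rw [hu'def, hπ', real_inner_smul_left, real_inner_smul_right] at h3
  have hxn : (‖x‖ : ℝ) ≠ 0 := norm_ne_zero_iff.mpr hx0
  have hun : (‖u‖ : ℝ) ≠ 0 := norm_ne_zero_iff.mpr hu0
  field_simp at h3
  simpa using h3

set_option maxHeartbeats 1600000 in
theorem stmt17
    {V : Type*} [NormedAddCommGroup V] [InnerProductSpace ℝ V]
    [FiniteDimensional ℝ V] (hdim : Module.finrank ℝ V = 7)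
    (π : V →ₗ[ℝ] V →ₗ[ℝ] V) (hπalt : ∀ x : V, π x x = 0)
    (hπvp : ∀ u v : V, Orthonormal ℝ ![u, v] → Orthonormal ℝ ![u, v, π u v])
    (U : Submodule ℝ V) (hU : Module.finrank ℝ U = 2)
    (x : V) (hx : x ∈ Uᗮ)
    (v v' : V) (hv : v ∈ U) (hv' : v' ∈ U) (hv1 : ‖v‖ = 1) (hv1' : ‖v'‖ = 1) :
    ‖U.orthogonalProjectionOnto (π x v)‖ = ‖U.orthogonalProjectionOnto (π x v')‖ := by
  classical
  obtain ⟨b⟩ : Nonempty (OrthonormalBasis (Fin 2) ℝ U) :=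
    ⟨(stdOrthonormalBasis ℝ U).reindex (finCongr hU)⟩
  set e0 : V := (b 0 : V) with he0
  set e1 : V := (b 1 : V) with he1
  have hbon := b.orthonormal
  rw [orthonormal_iff_ite] at hbon
  have h00 : ⟪e0, e0⟫ = 1 :=
    (Submodule.coe_inner _ _ _).symm.trans ((hbon 0 0).trans (if_pos rfl))
  have h11 : ⟪e1, e1⟫ = 1 :=
    (Submodule.coe_inner _ _ _).symm.trans ((hbon 1 1).trans (if_pos rfl))
  have h01 : ⟪e0, e1⟫ = 0 :=
    (Submodule.coe_inner _ _ _).symm.trans ((hbon 0 1).trans (if_neg (by decide)))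
  have h10 : ⟪e1, e0⟫ = 0 :=
    (Submodule.coe_inner _ _ _).symm.trans ((hbon 1 0).trans (if_neg (by decide)))
  have hxU : ∀ u ∈ U, ⟪x, u⟫ = 0 := fun u hu =>
    Submodule.inner_left_of_mem_orthogonal hu hx
  have he0U : e0 ∈ U := (b 0).2
  have he1U : e1 ∈ U := (b 1).2
  have A0 : ⟪e0, π x e0⟫ = 0 := aux17_inner_self π hπvp x e0 (hxU e0 he0U)
  have A1 : ⟪e1, π x e1⟫ = 0 := aux17_inner_self π hπvp x e1 (hxU e1 he1U)
  have Asum : ⟪e0 + e1, π x (e0 + e1)⟫ = 0 :=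
    aux17_inner_self π hπvp x (e0 + e1) (by rw [inner_add_right, hxU e0 he0U, hxU e1 he1U]; ring)
  have hαβ : ⟪e1, π x e0⟫ = -⟪e0, π x e1⟫ := by
    rw [map_add, inner_add_left, inner_add_right, inner_add_right, A0, A1] at Asum
    linarith
  have key : ∀ w : V, w ∈ U → ‖w‖ = 1 →
      ‖U.orthogonalProjectionOnto (π x w)‖ ^ 2 = ⟪e0, π x e1⟫ ^ 2 := by
    intro w hw hw1
    set c : ℝ := ⟪e0, w⟫ with hc
    set s : ℝ := ⟪e1, w⟫ with hs
    have hdecomp : w = c • e0 + s • e1 := by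
      have h := b.sum_repr' (⟨w, hw⟩ : U)
      rw [Fin.sum_univ_two] at h
      have h2 := congrArg (Subtype.val : U → V) h
      simpa [Submodule.coe_inner, ← he0, ← he1, ← hc, ← hs] using h2.symm
    have hcs : c ^ 2 + s ^ 2 = 1 := by
      have hww : ⟪w, w⟫ = 1 := by
        rw [real_inner_self_eq_norm_sq, hw1]; norm_num
      nth_rewrite 1 [hdecomp] at hww
      nth_rewrite 1 [hdecomp] at hww
      simp only [inner_add_left, inner_add_right, real_inner_smul_left, real_inner_smul_right,
        h00, h11, h01, h10] at hww
      nlinarith [hww]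
    have hπw : π x w = c • π x e0 + s • π x e1 := by
      rw [hdecomp, map_add, map_smul, map_smul]
    have hproj : (U.orthogonalProjectionOnto (π x w) : U) = ⟪e0, π x w⟫ • b 0 + ⟪e1, π x w⟫ • b 1 := by
      rw [b.orthogonalProjectionOnto_apply_eq_sum, Fin.sum_univ_two]
    have hi0 : ⟪e0, π x w⟫ = s * ⟪e0, π x e1⟫ := by
      rw [hπw, inner_add_right, real_inner_smul_right, real_inner_smul_right, A0]
      ring
    have hi1 : ⟪e1, π x w⟫ = -(c * ⟪e0, π x e1⟫) := by
      rw [hπw, inner_add_right, real_inner_smul_right, real_inner_smul_right, A1, hαβ]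
      ring
    have hnorm : ‖U.orthogonalProjectionOnto (π x w)‖ ^ 2 =
        ⟪e0, π x w⟫ ^ 2 + ⟪e1, π x w⟫ ^ 2 := by
      rw [← real_inner_self_eq_norm_sq, hproj]
      simp only [inner_add_left, inner_add_right, real_inner_smul_left, real_inner_smul_right]
      have b00 : ⟪b 0, b 0⟫ = (1 : ℝ) := by simpa using hbon 0 0
      have b11 : ⟪b 1, b 1⟫ = (1 : ℝ) := by simpa using hbon 1 1
      have b01 : ⟪b 0, b 1⟫ = (0 : ℝ) := by simpa using hbon 0 1
      have b10 : ⟪b 1, b 0⟫ = (0 : ℝ) := by simpa using hbon 1 0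
      rw [b00, b11, b01, b10]
      ring
    rw [hnorm, hi0, hi1]
    nlinarith [hcs]
  rw [← Real.sqrt_sq (norm_nonneg (U.orthogonalProjectionOnto (π x v))),
    ← Real.sqrt_sq (norm_nonneg (U.orthogonalProjectionOnto (π x v'))),
    key v hv hv1, key v' hv' hv1']
end
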